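/- arXiv:1910.07245 — 2 statements merged into one kernel-verified Lean document; each statement's English description precedes it below -/
import Mathlib

section
/- (Stein's L log L estimate) There is a dimensional constant c_n such that for every cube Q and every f ∈ L¹(Q), ‖f‖_{L log L, Q} |Q| ≤ c_n ∫_Q M(f χ_Q)(x) dx, where M is the Hardy–Littlewood maximal operator. -/
open MeasureTheory Metric Set
open scoped ENNReal

/-- The uncentered Hardy–Littlewood maximal operator over cubes (= closed balls in the
sup metric on `ℝⁿ = Fin n → ℝ`), acting on `ℝ≥0∞`-valued functions. -/
noncomputable def maximal {n : ℕ} (f : (Fin n → ℝ) → ℝ≥0∞) (x : Fin n → ℝ) : ℝ≥0∞ :=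
  ⨆ (c : Fin n → ℝ) (r : ℝ) (_ : 0 < r) (_ : x ∈ closedBall c r),
    (volume (closedBall c r))⁻¹ * ∫⁻ y in closedBall c r, f y

open Filter
open scoped Topology

lemma vol_cb {n : ℕ} (c : Fin n → ℝ) {ρ : ℝ} (hρ : 0 ≤ ρ) :
    volume (closedBall c ρ) = ENNReal.ofReal ((2*ρ)^n) := by
  rw [Real.volume_pi_closedBall c hρ, Fintype.card_fin]

lemma le_maximal {n : ℕ} (g : (Fin n → ℝ) → ℝ≥0∞) (c : Fin n → ℝ) {ρ : ℝ} (hρ : 0 < ρ)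
    {x : Fin n → ℝ} (hx : x ∈ closedBall c ρ) :
    (volume (closedBall c ρ))⁻¹ * ∫⁻ y in closedBall c ρ, g y ≤ maximal g x := by
  refine le_trans ?_ (le_iSup _ c)
  refine le_trans ?_ (le_iSup _ ρ)
  refine le_trans ?_ (le_iSup _ hρ)
  exact le_trans le_rfl (le_iSup (fun _ : x ∈ closedBall c ρ => _) hx)

-- Lebesgue differentiation, fixed center version
lemma ae_lebesgue {n : ℕ} (h : (Fin n → ℝ) → ℝ) (hint : Integrable h) :
    ∀ᵐ x, Tendsto (fun ρ => ⨍ y in closedBall x ρ, h y) (𝓝[>] (0:ℝ)) (𝓝 (h x)) := by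
  filter_upwards [IsUnifLocDoublingMeasure.ae_tendsto_average
    (μ := (volume : Measure (Fin n → ℝ))) hint.locallyIntegrable 1] with x hx
  refine hx (fun _ => x) id tendsto_id ?_
  filter_upwards [self_mem_nhdsWithin] with ρ hρ
  exact mem_closedBall_self (by rw [one_mul]; exact (mem_Ioi.mp hρ).le)

lemma isOpen_maximal_gt {n : ℕ} (g : (Fin n → ℝ) → ℝ≥0∞) (hg : (∫⁻ y, g y) ≠ ∞) (t : ℝ≥0∞) :
    IsOpen {x | t < maximal g x} := by
  rw [Metric.isOpen_iff]
  intro x hx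
  simp only [mem_setOf_eq, maximal, lt_iSup_iff] at hx
  obtain ⟨c, ρ, hρ, hxc, havg⟩ := hx
  set ν : Measure (Fin n → ℝ) := volume.withDensity g with hν
  have hνs : ∀ s : Set (Fin n → ℝ), MeasurableSet s → ν s = ∫⁻ y in s, g y := by
    intro s hs; rw [hν, withDensity_apply g hs]
  have hνfin : ∀ s, ν s ≠ ∞ := by
    intro s
    have h1 : ν univ ≠ ⊤ := by
      rw [hνs univ MeasurableSet.univ, Measure.restrict_univ]; exact hg
    exact ne_top_of_le_ne_top h1 (measure_mono (subset_univ s))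
  -- continuity from above
  have hinter : ⋂ m : ℕ, closedBall c (ρ + 1/(m+1)) = closedBall c ρ := by
    apply Subset.antisymm
    · intro y hy
      simp only [mem_iInter, mem_closedBall] at hy ⊢
      by_contra h
      push_neg at h
      obtain ⟨m, hm⟩ := exists_nat_one_div_lt (sub_pos.mpr h)
      exact absurd (hy m) (by push_cast; linarith [hm])
    · intro y hy
      simp only [mem_iInter, mem_closedBall] at hy ⊢
      intro m
      have : (0:ℝ) < 1/(m+1) := by positivity
      linarith
  have hanti : Antitone fun m : ℕ => closedBall c (ρ + 1/(m+1)) := by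
    intro a b hab
    apply closedBall_subset_closedBall
    have : (1:ℝ)/(b+1) ≤ 1/(a+1) := by
      apply one_div_le_one_div_of_le (by positivity) (by exact_mod_cast by omega)
    linarith
  have hν_tendsto : Tendsto (fun m : ℕ => ν (closedBall c (ρ + 1/(m+1)))) atTop
      (𝓝 (ν (closedBall c ρ))) := by
    rw [← hinter]
    exact tendsto_measure_iInter_atTop (fun m => (measurableSet_closedBall).nullMeasurableSet) hanti
      ⟨0, hνfin _⟩
  have hvol_tendsto : Tendsto (fun m : ℕ => (volume (closedBall c (ρ + 1/(m+1)))))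
      atTop (𝓝 (volume (closedBall c ρ))) := by
    have h1 : ∀ m : ℕ, volume (closedBall c (ρ + 1/(m+1)))
        = ENNReal.ofReal ((2*(ρ + 1/(m+1)))^n) := fun m => vol_cb c (by positivity)
    simp only [h1, vol_cb c hρ.le]
    apply ENNReal.tendsto_ofReal
    have : Tendsto (fun m : ℕ => ρ + 1/((m:ℝ)+1)) atTop (𝓝 ρ) := by
      have := tendsto_one_div_add_atTop_nhds_zero_nat (𝕜 := ℝ)
      simpa using (tendsto_const_nhds (x := ρ)).add this
    exact ((continuous_pow n).comp (continuous_const.mul continuous_id)).continuousAt.tendsto.comp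
      this
  have havg' : t < (volume (closedBall c ρ))⁻¹ * ν (closedBall c ρ) := by
    rwa [hνs _ measurableSet_closedBall]
  have hmul : Tendsto (fun m : ℕ => (volume (closedBall c (ρ + 1/(m+1))))⁻¹ *
      ν (closedBall c (ρ + 1/(m+1)))) atTop
      (𝓝 ((volume (closedBall c ρ))⁻¹ * ν (closedBall c ρ))) := by
    apply ENNReal.Tendsto.mul (hvol_tendsto.inv) _ hν_tendsto (Or.inr _)
    · left
      simp only [ne_eq, ENNReal.inv_eq_zero]
      rw [vol_cb c hρ.le]; exact ENNReal.ofReal_ne_top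
    · simp only [ne_eq, ENNReal.inv_eq_top, vol_cb c hρ.le, ENNReal.ofReal_eq_zero, not_le]
      positivity
  obtain ⟨m, hm⟩ := (hmul.eventually (lt_mem_nhds havg')).exists
  refine ⟨1/(m+1), by positivity, ?_⟩
  intro x' hx'
  simp only [mem_ball] at hx'
  have hx'' : x' ∈ closedBall c (ρ + 1/(m+1)) := by
    rw [mem_closedBall]
    calc dist x' c ≤ dist x' x + dist x c := dist_triangle x' x c
    _ ≤ 1/(m+1) + ρ := by
        have h1 := hx'.le
        have h2 := mem_closedBall.mp hxc
        push_cast at h1 ⊢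
        linarith
    _ = ρ + 1/(m+1) := by ring
  have := le_maximal g c (by positivity : (0:ℝ) < ρ + 1/(m+1)) hx''
  rw [← hνs _ measurableSet_closedBall] at this
  exact lt_of_lt_of_le hm (by exact_mod_cast this)

lemma inter_vol {n : ℕ} {c x : Fin n → ℝ} {r ρ : ℝ} (hr : 0 < r) (hρ : 0 < ρ)
    (hρ2 : ρ ≤ 2*r) (hx : x ∈ closedBall c r) :
    volume (closedBall x ρ) ≤ 2^n * volume (closedBall x ρ ∩ closedBall c r) := by
  have hball : closedBall x ρ = Set.pi univ fun i => Icc (x i - ρ) (x i + ρ) := by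
    rw [closedBall_pi x hρ.le]
    simp only [Real.closedBall_eq_Icc]
  have hball' : closedBall c r = Set.pi univ fun i => Icc (c i - r) (c i + r) := by
    rw [closedBall_pi c hr.le]
    simp only [Real.closedBall_eq_Icc]
  have hint : closedBall x ρ ∩ closedBall c r =
      Set.pi univ fun i => Icc (max (x i - ρ) (c i - r)) (min (x i + ρ) (c i + r)) := by
    rw [hball, hball', ← pi_inter_distrib]
    simp only [Icc_inter_Icc]
  have hcoord : ∀ i, ENNReal.ofReal ρ ≤
      volume (Icc (max (x i - ρ) (c i - r)) (min (x i + ρ) (c i + r))) := by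
    intro i
    rw [Real.volume_Icc]
    apply ENNReal.ofReal_le_ofReal
    have hd : |x i - c i| ≤ r := by
      have := dist_le_pi_dist x c i
      rw [Real.dist_eq] at this
      exact this.trans (mem_closedBall.mp hx)
    have := abs_le.mp hd
    rcases le_total (x i + ρ) (c i + r) with h1 | h1 <;>
      rcases le_total (x i - ρ) (c i - r) with h2 | h2 <;>
      simp [min_eq_left, min_eq_right, max_eq_left, max_eq_right, h1, h2] <;> linarith
  calc volume (closedBall x ρ) = ENNReal.ofReal ((2*ρ)^n) := by
        rw [Real.volume_pi_closedBall x hρ.le, Fintype.card_fin]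
    _ = 2^n * ENNReal.ofReal ρ ^ n := by
        rw [mul_pow, ENNReal.ofReal_mul (by positivity), ENNReal.ofReal_pow hρ.le,
          ENNReal.ofReal_pow (by norm_num : (0:ℝ) ≤ 2), ENNReal.ofReal_ofNat]
    _ ≤ 2^n * volume (closedBall x ρ ∩ closedBall c r) := by
        rw [hint, volume_pi_pi]
        gcongr
        calc ENNReal.ofReal ρ ^ n = ∏ _i : Fin n, ENNReal.ofReal ρ := by
              rw [Finset.prod_const, Finset.card_univ, Fintype.card_fin]
          _ ≤ _ := Finset.prod_le_prod' fun i _ => hcoord i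

lemma reverse_weak {n : ℕ} (c : Fin n → ℝ) {r : ℝ} (hr : 0 < r)
    (h : (Fin n → ℝ) → ℝ) (hint : Integrable h) (h0 : ∀ y, 0 ≤ h y)
    {l : ℝ} (hl : 0 < l)
    (hmass : ∫ y, h y < l * 2^n * (2*r)^n) :
    ∫⁻ y in closedBall c r ∩ {y | l < h y}, ENNReal.ofReal (h y) ≤
      ENNReal.ofReal (8^n * l) *
        volume ({x | ENNReal.ofReal l ≤ maximal (fun y => ENNReal.ofReal (h y)) x}
          ∩ closedBall c r) := by
  classical
  set Q := closedBall c r with hQ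
  set g : (Fin n → ℝ) → ℝ≥0∞ := fun y => ENNReal.ofReal (h y) with hg
  set Ω := {x | ENNReal.ofReal l ≤ maximal g x} with hΩ
  set L := {x | Tendsto (fun ρ => ⨍ y in closedBall x ρ, h y) (𝓝[>] (0:ℝ)) (𝓝 (h x))} with hL
  have hLc : volume Lᶜ = 0 := by
    have := ae_lebesgue h hint
    rwa [ae_iff] at this
  set E := (Q ∩ {y | l < h y}) ∩ L with hE
  -- integral over target set equals integral over E
  have hEae : (Q ∩ {y | l < h y} : Set _) =ᵐ[volume] E := by
    rw [Filter.eventuallyEq_set]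
    rw [ae_iff]
    apply measure_mono_null _ hLc
    intro y hy
    simp only [mem_setOf_eq, hE, mem_inter_iff, mem_compl_iff] at hy ⊢
    tauto
  -- basic integral facts
  have vol_pos : ∀ (x : Fin n → ℝ) {ρ : ℝ}, 0 < ρ → (0:ℝ) < (2*ρ)^n := by
    intro x ρ hρ; positivity
  have int_ball_eq : ∀ (x : Fin n → ℝ) (ρ : ℝ), 0 < ρ →
      ∫ y in closedBall x ρ, h y = (2*ρ)^n * ⨍ y in closedBall x ρ, h y := by
    intro x ρ hρ
    rw [setAverage_eq, smul_eq_mul, measureReal_def, vol_cb x hρ.le, ENNReal.toReal_ofReal (by positivity)]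
    rw [← mul_assoc, mul_inv_cancel₀ (by positivity), one_mul]
  have int_ball_le : ∀ (x : Fin n → ℝ) (ρ : ℝ), ∫ y in closedBall x ρ, h y ≤ ∫ y, h y :=
    fun x ρ => setIntegral_le_integral hint (Eventually.of_forall h0)
  -- choose radii
  have hex : ∀ x ∈ E, ∃ ρ : ℝ, 0 < ρ ∧ ρ ≤ 2*r ∧
      l * (2*ρ)^n ≤ ∫ y in closedBall x ρ, h y ∧
      ∀ ρ' : ℝ, 2*ρ < ρ' → ∫ y in closedBall x ρ', h y < l * (2*ρ')^n := by
    intro x hx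
    obtain ⟨⟨hxQ, hxl⟩, hxL⟩ := hx
    set T := {ρ : ℝ | 0 < ρ ∧ l * (2*ρ)^n ≤ ∫ y in closedBall x ρ, h y} with hT
    have hTne : T.Nonempty := by
      have hev : ∀ᶠ ρ in 𝓝[>] (0:ℝ), l < ⨍ y in closedBall x ρ, h y :=
        hxL.eventually (lt_mem_nhds (by exact hxl))
      obtain ⟨ρ, hρT, hρpos⟩ := (hev.and self_mem_nhdsWithin).exists
      refine ⟨ρ, mem_Ioi.mp hρpos, ?_⟩
      rw [int_ball_eq x ρ (mem_Ioi.mp hρpos)]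
      have := vol_pos x (mem_Ioi.mp hρpos)
      nlinarith [hρT]
    have hTsub : ∀ ρ ∈ T, ρ < 2*r := by
      intro ρ hρ
      obtain ⟨hρ0, hρint⟩ := hρ
      by_contra hcon
      push_neg at hcon
      have h1 : l * (2*(2*r))^n ≤ l * (2*ρ)^n := by
        apply mul_le_mul_of_nonneg_left _ hl.le
        exact pow_le_pow_left₀ (by positivity) (by linarith) n
      have h2 : l * (2*ρ)^n ≤ ∫ y, h y := hρint.trans (int_ball_le x ρ)
      have : l * 2^n * (2*r)^n = l * (2*(2*r))^n := by
        rw [show ((2*(2*r):ℝ))^n = 2^n*(2*r)^n from mul_pow 2 (2*r) n]; ring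
      linarith [hmass]
    have hbdd : BddAbove T := ⟨2*r, fun ρ hρ => (hTsub ρ hρ).le⟩
    set s := sSup T with hs
    obtain ⟨ρ₀, hρ₀⟩ := id hTne
    have hspos : 0 < s := lt_of_lt_of_le hρ₀.1 (le_csSup hbdd hρ₀)
    obtain ⟨ρ, hρT, hρgt⟩ := exists_lt_of_lt_csSup hTne (by linarith : s/2 < s)
    refine ⟨ρ, hρT.1, (hTsub ρ hρT).le.trans (le_refl _), hρT.2, ?_⟩
    intro ρ' hρ'
    have hρ's : s < ρ' := by
      have : ρ ≤ s := le_csSup hbdd hρT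
      linarith
    have : ρ' ∉ T := fun hmem => absurd (le_csSup hbdd hmem) (not_le.mpr hρ's)
    rw [hT, mem_setOf_eq, not_and] at this
    have := this (by linarith [hρT.1])
    linarith [not_le.mp this]
  choose! ρfun hρ1 hρ2 hρ3 hρ4 using hex
  -- Vitali covering
  obtain ⟨u, huE, hdisj, hcover⟩ :=
    Vitali.exists_disjoint_subfamily_covering_enlargement_closedBall E id ρfun (2*r)
      (fun a ha => hρ2 a ha) 4 (by norm_num)
  -- countability of u
  haveI hucnt : Countable ↥u := by
    have hdisj' : Pairwise (Function.onFun Disjoint fun b : ↥u => closedBall (b : Fin n → ℝ) (ρfun b)) := by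
      intro i j hij
      exact hdisj i.2 j.2 (fun hc => hij (Subtype.coe_injective hc))
    have hcnt := MeasureTheory.Measure.countable_meas_pos_of_disjoint_iUnion
      (μ := (volume : Measure (Fin n → ℝ)))
      (fun b : ↥u => (measurableSet_closedBall :
        MeasurableSet (closedBall (b : Fin n → ℝ) (ρfun b)))) hdisj'
    have huniv : {i : ↥u | 0 < volume (closedBall (i : Fin n → ℝ) (ρfun i))} = univ := by
      apply eq_univ_of_forall
      intro b
      have hb : (b : Fin n → ℝ) ∈ E := huE b.2
      simp only [mem_setOf_eq, vol_cb _ (hρ1 b hb).le, ENNReal.ofReal_pos]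
      have := hρ1 b hb
      positivity
    rw [huniv] at hcnt
    exact countable_univ_iff.mp hcnt
  -- each ball sits inside Ω
  have hball_sub : ∀ b : ↥u, closedBall (b : Fin n → ℝ) (ρfun b) ⊆ Ω := by
    intro b y hy
    have hb : (b : Fin n → ℝ) ∈ E := huE b.2
    have hvol : volume (closedBall (b : Fin n → ℝ) (ρfun b)) =
        ENNReal.ofReal ((2 * ρfun b)^n) := vol_cb _ (hρ1 b hb).le
    have hvol0 : volume (closedBall (b : Fin n → ℝ) (ρfun b)) ≠ 0 := by
      rw [hvol]; simp only [ne_eq, ENNReal.ofReal_eq_zero, not_le]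
      have := hρ1 b hb; positivity
    have hvoltop : volume (closedBall (b : Fin n → ℝ) (ρfun b)) ≠ ⊤ := by
      rw [hvol]; exact ENNReal.ofReal_ne_top
    have hIl : ENNReal.ofReal l * volume (closedBall (b : Fin n → ℝ) (ρfun b)) ≤
        ∫⁻ y in closedBall (b : Fin n → ℝ) (ρfun b), g y := by
      rw [hvol, ← ENNReal.ofReal_mul hl.le]
      rw [show (∫⁻ y in closedBall (b : Fin n → ℝ) (ρfun b), g y) =
        ENNReal.ofReal (∫ y in closedBall (b : Fin n → ℝ) (ρfun b), h y) from
        (ofReal_integral_eq_lintegral_ofReal hint.integrableOn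
          (Eventually.of_forall h0)).symm]
      exact ENNReal.ofReal_le_ofReal (hρ3 b hb)
    have key : ENNReal.ofReal l ≤
        (volume (closedBall (b : Fin n → ℝ) (ρfun b)))⁻¹ *
          ∫⁻ y in closedBall (b : Fin n → ℝ) (ρfun b), g y := by
      rw [← ENNReal.mul_le_mul_iff_right hvol0 hvoltop]
      calc volume (closedBall (b : Fin n → ℝ) (ρfun b)) * ENNReal.ofReal l
          = ENNReal.ofReal l * volume (closedBall (b : Fin n → ℝ) (ρfun b)) := mul_comm _ _
        _ ≤ ∫⁻ y in closedBall (b : Fin n → ℝ) (ρfun b), g y := hIl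
        _ = volume (closedBall (b : Fin n → ℝ) (ρfun b)) *
            ((volume (closedBall (b : Fin n → ℝ) (ρfun b)))⁻¹ *
              ∫⁻ y in closedBall (b : Fin n → ℝ) (ρfun b), g y) := by
            rw [← mul_assoc, ENNReal.mul_inv_cancel hvol0 hvoltop, one_mul]
    exact le_trans key (le_maximal g _ (hρ1 b hb) hy)
  -- main chain
  calc ∫⁻ y in Q ∩ {y | l < h y}, g y
      = ∫⁻ y in E, g y := setLIntegral_congr hEae
    _ ≤ ∫⁻ y in ⋃ b : ↥u, closedBall (b : Fin n → ℝ) (4 * ρfun b), g y := by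
        apply lintegral_mono_set
        intro a ha
        obtain ⟨b, hbu, hsub⟩ := hcover a ha
        exact mem_iUnion.mpr ⟨⟨b, hbu⟩, hsub (mem_closedBall_self (hρ1 a ha).le)⟩
    _ ≤ ∑' b : ↥u, ∫⁻ y in closedBall (b : Fin n → ℝ) (4 * ρfun b), g y :=
        lintegral_iUnion_le _ _
    _ ≤ ∑' b : ↥u, ENNReal.ofReal (4^n * l) *
          volume (closedBall (b : Fin n → ℝ) (ρfun b)) := by
        apply ENNReal.tsum_le_tsum
        intro b
        have hb : (b : Fin n → ℝ) ∈ E := huE b.2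
        have h4 : ∫ y in closedBall (b : Fin n → ℝ) (4 * ρfun b), h y
            < l * (2*(4 * ρfun b))^n := by
          apply hρ4 b hb
          have := hρ1 b hb; linarith
        calc ∫⁻ y in closedBall (b : Fin n → ℝ) (4 * ρfun b), g y
            = ENNReal.ofReal (∫ y in closedBall (b : Fin n → ℝ) (4 * ρfun b), h y) :=
              (ofReal_integral_eq_lintegral_ofReal hint.integrableOn
                (Eventually.of_forall h0)).symm
          _ ≤ ENNReal.ofReal (l * (2*(4 * ρfun b))^n) := ENNReal.ofReal_le_ofReal h4.le
          _ = ENNReal.ofReal (4^n * l) * volume (closedBall (b : Fin n → ℝ) (ρfun b)) := by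
              rw [vol_cb _ (hρ1 b hb).le, ← ENNReal.ofReal_mul (by positivity)]
              congr 1
              rw [show ((2*(4 * ρfun b):ℝ))^n = 4^n * (2 * ρfun b)^n by
                rw [show ((2*(4 * ρfun b)):ℝ) = 4 * (2 * ρfun b) by ring, mul_pow]]
              ring
    _ = ENNReal.ofReal (4^n * l) * ∑' b : ↥u, volume (closedBall (b : Fin n → ℝ) (ρfun b)) :=
        ENNReal.tsum_mul_left
    _ ≤ ENNReal.ofReal (4^n * l) * (2^n *
          ∑' b : ↥u, volume (closedBall (b : Fin n → ℝ) (ρfun b) ∩ Q)) := by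
        gcongr
        rw [← ENNReal.tsum_mul_left]
        apply ENNReal.tsum_le_tsum
        intro b
        have hb : (b : Fin n → ℝ) ∈ E := huE b.2
        exact inter_vol hr (hρ1 b hb) (hρ2 b hb) hb.1.1
    _ = ENNReal.ofReal (4^n * l) *
          (2^n * volume (⋃ b : ↥u, closedBall (b : Fin n → ℝ) (ρfun b) ∩ Q)) := by
        rw [measure_iUnion ?_ (fun b => measurableSet_closedBall.inter measurableSet_closedBall)]
        intro i j hij
        have := hdisj i.2 j.2 (fun hc => hij (Subtype.coe_injective hc))
        exact (this.mono inter_subset_left inter_subset_left)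
    _ ≤ ENNReal.ofReal (4^n * l) * (2^n * volume (Ω ∩ Q)) := by
        gcongr
        apply iUnion_subset
        intro b
        exact inter_subset_inter_left Q (hball_sub b)
    _ = ENNReal.ofReal (8^n * l) * volume (Ω ∩ Q) := by
        rw [← mul_assoc]
        congr 1
        rw [show ((2:ℝ≥0∞)^n) = ENNReal.ofReal (2^n) by
          rw [ENNReal.ofReal_pow (by norm_num), ENNReal.ofReal_ofNat],
          ← ENNReal.ofReal_mul (by positivity)]
        congr 1
        rw [show ((8:ℝ))^n = 4^n * 2^n by rw [← mul_pow]; norm_num]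
        ring

lemma log_decomp (s : ℝ) (hs : 0 ≤ s) :
    ENNReal.ofReal (s * Real.log (Real.exp 1 + s)) ≤
      2 * ENNReal.ofReal s + ∑' k : ℕ, (if (2:ℝ)^k < s then ENNReal.ofReal s else 0) := by
  obtain ⟨m₀, hm₀⟩ := pow_unbounded_of_one_lt s one_lt_two
  have hfind : ∃ m : ℕ, s ≤ 2^m := ⟨m₀, hm₀.le⟩
  set m := Nat.find hfind with hm
  have hsm : s ≤ 2^m := Nat.find_spec hfind
  have hreal : s * Real.log (Real.exp 1 + s) ≤ (2+m)*s := by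
    have hlog : Real.log (Real.exp 1 + s) ≤ 2 + m := by
      have h2m : (1:ℝ) ≤ 2^m := one_le_pow₀ one_le_two
      have h1 : Real.exp 1 + s ≤ Real.exp 1 * Real.exp 1 * 2^m := by
        have he : (2.7182818283:ℝ) < Real.exp 1 := Real.exp_one_gt_d9
        have he2 : Real.exp 1 < 2.7182818286 := Real.exp_one_lt_d9
        have h7 : (7:ℝ) ≤ Real.exp 1 * Real.exp 1 := by nlinarith
        have h3 : Real.exp 1 + s ≤ 7 * 2^m := by nlinarith
        have h4 : (7:ℝ) * 2^m ≤ Real.exp 1 * Real.exp 1 * 2^m :=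
          mul_le_mul_of_nonneg_right h7 (by positivity)
        linarith
      calc Real.log (Real.exp 1 + s) ≤ Real.log (Real.exp 1 * Real.exp 1 * 2^m) :=
            Real.log_le_log (by positivity) h1
        _ = 2 + m * Real.log 2 := by
            rw [Real.log_mul (by positivity) (by positivity),
              Real.log_mul (Real.exp_ne_zero 1) (Real.exp_ne_zero 1), Real.log_exp,
              Real.log_pow]
            push_cast; ring
        _ ≤ 2 + m := by
            have h2 : Real.log 2 ≤ 1 := by
              have := Real.log_two_lt_d9; linarith
            nlinarith [Nat.cast_nonneg (α := ℝ) m]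
    nlinarith [hlog, hs]
  calc ENNReal.ofReal (s * Real.log (Real.exp 1 + s)) ≤ ENNReal.ofReal ((2+m)*s) :=
        ENNReal.ofReal_le_ofReal hreal
    _ = 2 * ENNReal.ofReal s + m * ENNReal.ofReal s := by
        rw [add_mul, ENNReal.ofReal_add (by positivity) (by positivity),
          ENNReal.ofReal_mul (by norm_num : (0:ℝ) ≤ 2),
          ENNReal.ofReal_mul (by positivity : (0:ℝ) ≤ (m:ℝ))]
        norm_num
    _ ≤ _ := by
        gcongr
        have hterm : ∀ k ∈ Finset.range m,
            (if (2:ℝ)^k < s then ENNReal.ofReal s else 0) = ENNReal.ofReal s := by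
          intro k hk
          rw [if_pos (not_le.mp (Nat.find_min hfind (Finset.mem_range.mp hk)))]
        calc (m : ℝ≥0∞) * ENNReal.ofReal s
            = ∑ k ∈ Finset.range m, (if (2:ℝ)^k < s then ENNReal.ofReal s else 0) := by
              rw [Finset.sum_congr rfl hterm, Finset.sum_const, Finset.card_range,
                nsmul_eq_mul]
          _ ≤ _ := ENNReal.sum_le_tsum _

lemma pow_sum_le (m : ℕ) : ∑ k ∈ Finset.range m, (2:ℝ≥0∞)^k ≤ 2^m := by
  induction m with
  | zero => simp
  | succ m ih =>
    rw [Finset.sum_range_succ, pow_succ, mul_two]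
    exact add_le_add ih le_rfl

lemma geom_bound (β M : ℝ≥0∞) :
    ∑' k : ℕ, (if 2^k * β < 2*M then 2^k * β else 0) ≤ 4 * M := by
  rw [ENNReal.tsum_eq_iSup_sum]
  apply iSup_le
  intro F
  set F' := F.filter (fun k => 2^k * β < 2*M) with hF'
  have hsum : ∑ k ∈ F, (if 2^k * β < 2*M then 2^k * β else 0) = ∑ k ∈ F', 2^k * β := by
    rw [hF', Finset.sum_filter]
  rw [hsum]
  rcases F'.eq_empty_or_nonempty with he | hne
  · rw [he]; simp
  set K := F'.max' hne with hK
  have hKmem : K ∈ F' := F'.max'_mem hne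
  have hKlt : 2^K * β < 2*M := by
    have := Finset.mem_filter.mp hKmem
    simpa using this.2
  calc ∑ k ∈ F', 2^k * β ≤ ∑ k ∈ Finset.range (K+1), 2^k * β := by
        apply Finset.sum_le_sum_of_subset
        intro k hk
        rw [Finset.mem_range]
        exact Nat.lt_succ_of_le (F'.le_max' k hk)
    _ = (∑ k ∈ Finset.range (K+1), (2:ℝ≥0∞)^k) * β := by rw [Finset.sum_mul]
    _ ≤ 2^(K+1) * β := mul_le_mul_left (pow_sum_le _) β
    _ = 2 * (2^K * β) := by rw [pow_succ]; ring
    _ ≤ 2 * (2*M) := mul_le_mul_right hKlt.le 2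
    _ = 4 * M := by ring

/-- The normalized Luxemburg (Orlicz) average
`‖f‖_{Φ,Q} = inf{α > 0 : (1/|Q|)∫_Q Φ(|f|/α) ≤ 1}`. -/
noncomputable def orliczAvg {n : ℕ} (Φ : ℝ → ℝ) (f : (Fin n → ℝ) → ℝ)
    (Q : Set (Fin n → ℝ)) : ℝ :=
  sInf {α : ℝ | 0 < α ∧ ∫⁻ y in Q, ENNReal.ofReal (Φ (|f y| / α)) ≤ volume Q}

/-- The normalized `L log L` average over `Q`, with `Φ(t) = t·log(e+t)`. -/
noncomputable def llogl {n : ℕ} (f : (Fin n → ℝ) → ℝ) (Q : Set (Fin n → ℝ)) : ℝ :=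
  orliczAvg (fun t => t * Real.log (Real.exp 1 + t)) f Q

/-- Stein's `L log L` estimate: there is a dimensional constant `c_n` such that for
every cube `Q` and every `f ∈ L¹(Q)`, `‖f‖_{L log L,Q}|Q| ≤ c_n ∫_Q M(fχ_Q)`. -/
theorem stmt15 (n : ℕ) :
    ∃ C : ℝ, 0 < C ∧
      ∀ (c : Fin n → ℝ) (r : ℝ), 0 < r →
      ∀ f : (Fin n → ℝ) → ℝ, IntegrableOn f (closedBall c r) volume →
        ENNReal.ofReal (llogl f (closedBall c r)) * volume (closedBall c r) ≤
          ENNReal.ofReal C *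
            ∫⁻ x in closedBall c r,
              maximal ((closedBall c r).indicator fun y => (‖f y‖₊ : ℝ≥0∞)) x := by
  classical
  set C : ℝ := 2 + 4 * 8^n with hC
  have hCpos : (0:ℝ) < C := by positivity
  have hC2 : (2:ℝ) ≤ C := by
    have : (0:ℝ) ≤ 4 * 8^n := by positivity
    linarith
  refine ⟨C, hCpos, ?_⟩
  intro c r hr f hf
  set Q := closedBall c r with hQ
  set h : (Fin n → ℝ) → ℝ := Q.indicator (fun y => |f y|) with hh
  have h0 : ∀ y, 0 ≤ h y := fun y => indicator_nonneg (fun y _ => abs_nonneg _) y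
  set g : (Fin n → ℝ) → ℝ≥0∞ := fun y => ENNReal.ofReal (h y) with hg
  have hgeq : (Q.indicator fun y => (‖f y‖₊ : ℝ≥0∞)) = g := by
    funext y
    by_cases hy : y ∈ Q
    · simp only [indicator_of_mem hy, hg, hh, indicator_of_mem hy]
      rw [← enorm_eq_nnnorm, ← ofReal_norm, Real.norm_eq_abs]
    · simp only [indicator_of_notMem hy, hg, hh, indicator_of_notMem hy, ENNReal.ofReal_zero]
  rw [hgeq]
  set A := ∫⁻ x in Q, maximal g x with hA
  have hint : Integrable h := by
    rw [hh]
    exact IntegrableOn.integrable_indicator (hf.abs) measurableSet_closedBall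
  have hIg : ∫⁻ y, g y = ∫⁻ y in Q, g y := by
    have hind : g = Q.indicator g := by
      funext y; by_cases hy : y ∈ Q
      · rw [indicator_of_mem hy]
      · rw [indicator_of_notMem hy, hg]
        simp only [hh, indicator_of_notMem hy, ENNReal.ofReal_zero]
    conv_lhs => rw [hind]
    exact lintegral_indicator measurableSet_closedBall g
  set I0 := ∫⁻ y in Q, g y with hI0
  have hI0A : I0 ≤ A := by
    rw [hI0, hA]
    have hptk : ∀ x ∈ Q, (volume Q)⁻¹ * I0 ≤ maximal g x := fun x hx =>
      le_maximal g c hr hx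
    have hvQ : volume Q = ENNReal.ofReal ((2*r)^n) := vol_cb c hr.le
    have hvQ0 : volume Q ≠ 0 := by
      rw [hvQ]; simp only [ne_eq, ENNReal.ofReal_eq_zero, not_le]; positivity
    have hvQtop : volume Q ≠ ⊤ := by rw [hvQ]; exact ENNReal.ofReal_ne_top
    calc I0 = volume Q * ((volume Q)⁻¹ * I0) := by
          rw [← mul_assoc, ENNReal.mul_inv_cancel hvQ0 hvQtop, one_mul]
      _ = ∫⁻ _ in Q, (volume Q)⁻¹ * I0 := by
          rw [setLIntegral_const, mul_comm]
      _ ≤ ∫⁻ x in Q, maximal g x := by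
          apply setLIntegral_mono' measurableSet_closedBall hptk
  -- the llogl set
  have hSet : llogl f Q = sInf {α : ℝ | 0 < α ∧
      ∫⁻ y in Q, ENNReal.ofReal ((|f y| / α) * Real.log (Real.exp 1 + |f y| / α))
        ≤ volume Q} := rfl
  have hvQ : volume Q = ENNReal.ofReal ((2*r)^n) := vol_cb c hr.le
  have hvQ0 : volume Q ≠ 0 := by
    rw [hvQ]; simp only [ne_eq, ENNReal.ofReal_eq_zero, not_le]; positivity
  have hvQtop : volume Q ≠ ⊤ := by rw [hvQ]; exact ENNReal.ofReal_ne_top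
  have hCne : ENNReal.ofReal C ≠ 0 := by
    simp only [ne_eq, ENNReal.ofReal_eq_zero, not_le]; exact hCpos
  by_cases hAtop : A = ⊤
  · rw [hAtop, ENNReal.mul_top hCne]
    exact le_top
  by_cases hI00 : I0 = 0
  · -- f vanishes a.e. on Q
    have hgm : AEMeasurable g (volume.restrict Q) :=
      (hint.aemeasurable.restrict).ennreal_ofReal
    have hg0 : ∀ᵐ y ∂(volume.restrict Q), g y = 0 := by
      have := (lintegral_eq_zero_iff' hgm).mp hI00
      filter_upwards [this] with y hy using hy
    have hf0 : ∀ᵐ y ∂(volume.restrict Q), y ∈ Q → |f y| = 0 := by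
      filter_upwards [hg0] with y hy hyQ
      rw [hg] at hy
      simp only [ENNReal.ofReal_eq_zero] at hy
      have : h y = |f y| := by rw [hh, indicator_of_mem hyQ]
      have := this ▸ hy
      exact le_antisymm this (abs_nonneg _)
    have hll : llogl f Q ≤ 0 := by
      apply le_of_forall_pos_le_add
      intro ε hε
      rw [zero_add, hSet]
      apply csInf_le ⟨0, fun b hb => hb.1.le⟩
      refine ⟨hε, ?_⟩
      have : ∫⁻ y in Q, ENNReal.ofReal ((|f y| / ε) * Real.log (Real.exp 1 + |f y| / ε))
          = 0 := by
        rw [← lintegral_zero (μ := volume.restrict Q)]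
        apply lintegral_congr_ae
        filter_upwards [hf0, ae_restrict_mem measurableSet_closedBall] with y hy hyQ
        rw [hy hyQ]
        simp
      rw [this]
      exact zero_le
    calc ENNReal.ofReal (llogl f Q) * volume Q = 0 := by
          rw [ENNReal.ofReal_eq_zero.mpr hll, zero_mul]
      _ ≤ _ := zero_le
  -- main case
  have hA0 : A ≠ 0 := fun hz => hI00 (le_antisymm (hz ▸ hI0A) zero_le)
  set a := A.toReal with ha
  have hapos : 0 < a := ENNReal.toReal_pos hA0 hAtop
  have hAa : A = ENNReal.ofReal a := (ENNReal.ofReal_toReal hAtop).symm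
  set v : ℝ := (2*r)^n with hv
  have hvpos : 0 < v := by positivity
  set α : ℝ := C * a / v with hα
  have hαpos : 0 < α := by positivity
  set β := ENNReal.ofReal α with hβ
  have hβ0 : β ≠ 0 := by
    simp only [hβ, ne_eq, ENNReal.ofReal_eq_zero, not_le]; exact hαpos
  have hβtop : β ≠ ⊤ := ENNReal.ofReal_ne_top
  -- the key integral estimate
  have hmain : ∫⁻ y in Q, ENNReal.ofReal ((h y / α) * Real.log (Real.exp 1 + h y / α))
      ≤ volume Q := by
    have hgfin : (∫⁻ y, g y) ≠ ⊤ := by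
      rw [hIg]; exact ne_top_of_le_ne_top hAtop hI0A
    set h' := hint.aemeasurable.mk h with hh'
    have hh'm : Measurable h' := hint.aemeasurable.measurable_mk
    have hhae : h =ᵐ[volume] h' := hint.aemeasurable.ae_eq_mk
    have hpt : ∀ y, ENNReal.ofReal ((h y / α) * Real.log (Real.exp 1 + h y / α)) ≤
        2 * ENNReal.ofReal (h y / α) +
          ∑' k : ℕ, (if (2:ℝ)^k < h y / α then ENNReal.ofReal (h y / α) else 0) :=
      fun y => log_decomp _ (div_nonneg (h0 y) hαpos.le)
    have hterm_meas : ∀ k : ℕ, AEMeasurable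
        (fun y => (if (2:ℝ)^k < h y / α then ENNReal.ofReal (h y / α) else 0))
        (volume.restrict Q) := by
      intro k
      refine ⟨fun y => (if (2:ℝ)^k < h' y / α then ENNReal.ofReal (h' y / α) else 0), ?_, ?_⟩
      · apply Measurable.ite
        · exact measurableSet_lt measurable_const (hh'm.div_const α)
        · exact (hh'm.div_const α).ennreal_ofReal
        · exact measurable_const
      · filter_upwards [ae_restrict_of_ae hhae] with y hy
        rw [hy]
    have hofm : AEMeasurable (fun y => ENNReal.ofReal (h y / α)) (volume.restrict Q) :=
      ((hint.aemeasurable.restrict).div_const α).ennreal_ofReal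
    have hdiv : ∀ y, ENNReal.ofReal (h y / α) = g y * β⁻¹ := by
      intro y
      rw [div_eq_mul_inv, ENNReal.ofReal_mul' (by positivity), hβ,
        ENNReal.ofReal_inv_of_pos hαpos]
    have hpiece1 : ∫⁻ y in Q, ENNReal.ofReal (h y / α) = I0 * β⁻¹ := by
      simp_rw [hdiv]
      rw [lintegral_mul_const' β⁻¹ _ (ENNReal.inv_ne_top.mpr hβ0), ← hI0]
    set U : ℕ → Set (Fin n → ℝ) := fun k => {x | (2:ℝ≥0∞)^k * β / 2 < maximal g x} with hU
    have hUopen : ∀ k : ℕ, IsOpen (U k) :=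
      fun k => isOpen_maximal_gt g hgfin _
    have hpowne : ∀ k : ℕ, (2:ℝ≥0∞)^k * β ≠ 0 :=
      fun k => mul_ne_zero (pow_ne_zero k (by norm_num)) hβ0
    have hpowtop : ∀ k : ℕ, (2:ℝ≥0∞)^k * β ≠ ⊤ :=
      fun k => ENNReal.mul_ne_top (ENNReal.pow_ne_top (by norm_num)) hβtop
    have hterm_le : ∀ k : ℕ,
        (∫⁻ y in Q, (if (2:ℝ)^k < h y / α then ENNReal.ofReal (h y / α) else 0))
          ≤ ENNReal.ofReal (8^n) * (2^k * β * volume (U k ∩ Q)) * β⁻¹ := by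
      intro k
      set l : ℝ := 2^k * α with hl
      have hlpos : 0 < l := by positivity
      have hofl : ENNReal.ofReal l = 2^k * β := by
        rw [hl, ENNReal.ofReal_mul (by positivity), ENNReal.ofReal_pow (by norm_num),
          ENNReal.ofReal_ofNat, hβ]
      set S := {y | l < h y} with hS
      have hSnm : NullMeasurableSet S (volume.restrict Q) := by
        apply NullMeasurableSet.mono_ac ?_ Measure.restrict_le_self.absolutelyContinuous
        exact nullMeasurableSet_lt aemeasurable_const hint.aemeasurable
      have hite : ∀ y, (if (2:ℝ)^k < h y / α then ENNReal.ofReal (h y / α) else 0)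
          = S.indicator (fun y => ENNReal.ofReal (h y / α)) y := by
        intro y
        by_cases hy : y ∈ S
        · rw [indicator_of_mem hy, if_pos]
          rw [lt_div_iff₀ hαpos]
          calc (2:ℝ)^k * α = l := rfl
            _ < h y := hy
        · rw [indicator_of_notMem hy, if_neg]
          intro hcon
          exact hy (show l < h y from (lt_div_iff₀ hαpos).mp hcon)
      have hintle : ∫ y, h y ≤ a := by
        have he := ofReal_integral_eq_lintegral_ofReal hint (Eventually.of_forall h0)
        have h2 : ENNReal.ofReal (∫ y, h y) ≤ A := by
          rw [he, hIg]; exact hI0A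
        rw [hAa] at h2
        exact (ENNReal.ofReal_le_ofReal_iff hapos.le).mp h2
      have hmass : ∫ y, h y < l * 2^n * (2*r)^n := by
        have h2k : (1:ℝ) ≤ 2^k := one_le_pow₀ one_le_two
        have h2n : (1:ℝ) ≤ 2^n := one_le_pow₀ one_le_two
        have hαv : α * v = C * a := by rw [hα]; field_simp
        have heq : l * 2^n * (2*r)^n = 2^k * 2^n * (C * a) := by
          rw [hl, show ((2*r):ℝ)^n = v from rfl, ← hαv]; ring
        rw [heq]
        have h1 : (1:ℝ) ≤ 2^k * 2^n := by nlinarith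
        have hCa : 2*a ≤ C*a := by nlinarith
        have h3 : C*a ≤ 2^k*2^n*(C*a) := le_mul_of_one_le_left (by positivity) h1
        linarith
      have hrw := reverse_weak c hr h hint h0 hlpos hmass
      have hΩU : {x | (2:ℝ≥0∞)^k * β ≤ maximal g x} ⊆ U k := by
        intro x hx
        have h1 : (2:ℝ≥0∞)^k * β / 2 < 2^k * β :=
          ENNReal.half_lt_self (hpowne k) (hpowtop k)
        exact lt_of_lt_of_le h1 hx
      calc (∫⁻ y in Q, (if (2:ℝ)^k < h y / α then ENNReal.ofReal (h y / α) else 0))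
          = ∫⁻ y in Q, S.indicator (fun y => ENNReal.ofReal (h y / α)) y := by
            simp_rw [hite]
        _ = ∫⁻ y in Q ∩ S, ENNReal.ofReal (h y / α) := by
            rw [lintegral_indicator₀ hSnm, Measure.restrict_restrict₀ hSnm, Set.inter_comm]
        _ = (∫⁻ y in Q ∩ S, g y) * β⁻¹ := by
            simp_rw [hdiv]
            rw [lintegral_mul_const' β⁻¹ _ (ENNReal.inv_ne_top.mpr hβ0)]
        _ ≤ (ENNReal.ofReal (8^n * l) *
              volume ({x | ENNReal.ofReal l ≤ maximal g x} ∩ Q)) * β⁻¹ :=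
            mul_le_mul_left hrw β⁻¹
        _ ≤ ENNReal.ofReal (8^n) * (2^k * β * volume (U k ∩ Q)) * β⁻¹ := by
            apply mul_le_mul_left
            rw [ENNReal.ofReal_mul (by positivity : (0:ℝ) ≤ 8^n), hofl, mul_assoc]
            have hmono : volume ({x | (2:ℝ≥0∞)^k * β ≤ maximal g x} ∩ Q)
                ≤ volume (U k ∩ Q) := measure_mono (inter_subset_inter_left Q hΩU)
            exact mul_le_mul_right (mul_le_mul_right hmono (2^k * β)) (ENNReal.ofReal (8^n))
    have hsum : ∑' k : ℕ, (2:ℝ≥0∞)^k * β * volume (U k ∩ Q) ≤ 4 * A := by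
      have hmeas : ∀ k, MeasurableSet (U k) := fun k => (hUopen k).measurableSet
      have hface : ∀ k : ℕ, (2:ℝ≥0∞)^k * β * volume (U k ∩ Q)
          = ∫⁻ x in Q, (U k).indicator (fun _ => (2:ℝ≥0∞)^k * β) x := by
        intro k
        rw [lintegral_indicator (hmeas k), setLIntegral_const,
          Measure.restrict_apply (hmeas k)]
      calc ∑' k : ℕ, (2:ℝ≥0∞)^k * β * volume (U k ∩ Q)
          = ∑' k : ℕ, ∫⁻ x in Q, (U k).indicator (fun _ => (2:ℝ≥0∞)^k * β) x :=
            tsum_congr hface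
        _ = ∫⁻ x in Q, ∑' k : ℕ, (U k).indicator (fun _ => (2:ℝ≥0∞)^k * β) x :=
            (lintegral_tsum (fun k =>
              ((measurable_const.indicator (hmeas k))).aemeasurable)).symm
        _ ≤ ∫⁻ x in Q, 4 * maximal g x := by
            apply lintegral_mono
            intro x
            refine le_trans (le_of_eq (tsum_congr fun k => ?_)) (geom_bound β (maximal g x))
            rw [Set.indicator_apply]
            by_cases hx : x ∈ U k
            · rw [if_pos hx, if_pos]
              have h1 : (2:ℝ≥0∞)^k * β / 2 < maximal g x := hx
              rw [ENNReal.div_lt_iff (Or.inl (two_ne_zero)) (Or.inl (ENNReal.ofNat_ne_top))] at h1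
              rwa [mul_comm (maximal g x) 2] at h1
            · rw [if_neg hx, if_neg]
              intro hcon
              apply hx
              show (2:ℝ≥0∞)^k * β / 2 < maximal g x
              rw [ENNReal.div_lt_iff (Or.inl (two_ne_zero)) (Or.inl (ENNReal.ofNat_ne_top)),
                mul_comm (maximal g x) 2]
              exact hcon
        _ = 4 * A := by
            rw [lintegral_const_mul' 4 _ (by norm_num), hA]
    have hofC : ENNReal.ofReal C = 2 + 4 * ENNReal.ofReal (8^n) := by
      rw [hC, ENNReal.ofReal_add (by norm_num) (by positivity),
        ENNReal.ofReal_mul (by norm_num : (0:ℝ) ≤ 4)]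
      norm_num
    have hfinal : ENNReal.ofReal C * A * β⁻¹ = volume Q := by
      rw [hvQ, hAa, ← ENNReal.ofReal_mul hCpos.le, hβ, ← div_eq_mul_inv,
        ← ENNReal.ofReal_div_of_pos hαpos]
      congr 1
      rw [hα]
      field_simp
    calc ∫⁻ y in Q, ENNReal.ofReal ((h y / α) * Real.log (Real.exp 1 + h y / α))
        ≤ ∫⁻ y in Q, (2 * ENNReal.ofReal (h y / α) +
            ∑' k : ℕ, (if (2:ℝ)^k < h y / α then ENNReal.ofReal (h y / α) else 0)) :=
          lintegral_mono hpt
      _ = 2 * (∫⁻ y in Q, ENNReal.ofReal (h y / α)) +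
            ∑' k : ℕ, ∫⁻ y in Q,
              (if (2:ℝ)^k < h y / α then ENNReal.ofReal (h y / α) else 0) := by
          rw [lintegral_add_left' (hofm.const_mul 2),
            lintegral_const_mul' 2 _ ENNReal.ofNat_ne_top, lintegral_tsum hterm_meas]
      _ ≤ 2 * (I0 * β⁻¹) +
            ∑' k : ℕ, ENNReal.ofReal (8^n) * (2^k * β * volume (U k ∩ Q)) * β⁻¹ := by
          apply add_le_add
          · rw [hpiece1]
          · exact ENNReal.tsum_le_tsum hterm_le
      _ = 2 * I0 * β⁻¹ + ENNReal.ofReal (8^n) *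
            (∑' k : ℕ, (2:ℝ≥0∞)^k * β * volume (U k ∩ Q)) * β⁻¹ := by
          rw [← mul_assoc]
          congr 1
          rw [ENNReal.tsum_mul_right, ENNReal.tsum_mul_left]
      _ ≤ 2 * A * β⁻¹ + ENNReal.ofReal (8^n) * (4 * A) * β⁻¹ :=
          add_le_add (mul_le_mul_left (mul_le_mul_right hI0A 2) _)
            (mul_le_mul_left (mul_le_mul_right hsum _) _)
      _ = ENNReal.ofReal C * A * β⁻¹ := by
          rw [hofC]; ring
      _ = volume Q := hfinal
  -- conclude
  have hmem : llogl f Q ≤ α := by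
    rw [hSet]
    apply csInf_le ⟨0, fun b hb => hb.1.le⟩
    refine ⟨hαpos, ?_⟩
    have : ∫⁻ y in Q, ENNReal.ofReal ((|f y| / α) * Real.log (Real.exp 1 + |f y| / α))
        = ∫⁻ y in Q, ENNReal.ofReal ((h y / α) * Real.log (Real.exp 1 + h y / α)) := by
      apply setLIntegral_congr_fun measurableSet_closedBall
      intro y hy
      beta_reduce
      rw [hh, indicator_of_mem hy]
    rw [this]
    exact hmain
  calc ENNReal.ofReal (llogl f Q) * volume Q ≤ ENNReal.ofReal α * volume Q :=
        mul_le_mul_left (ENNReal.ofReal_le_ofReal hmem) _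
    _ = ENNReal.ofReal C * A := by
        rw [hvQ, ← ENNReal.ofReal_mul hαpos.le,
          show α * v = C * a by rw [hα]; field_simp,
          ENNReal.ofReal_mul hCpos.le, ← hAa]
end

section
/- Let 𝒮 ⊆ 𝒟 be a finite family of dyadic cubes in a dyadic lattice, stratified as 𝒮 = ∪_{ν=0}^N 𝒮_ν where 𝒮₀ consists of the maximal cubes of 𝒮 and 𝒮_{ν+1} of the maximal cubes of 𝒮 \ ∪_{l≤ν}𝒮_l. For Q ∈ 𝒮_ν and m ∈ ℕ define A_m(Q) = ∪{Q' ∈ 𝒮_{ν+m} : Q' ⊆ Q}, and E_Q = Q \ ∪{Q' ∈ 𝒮_{ν+1} : Q' ⊆ Q}. Then the sets {E_Q}_{Q∈𝒮} are pairwise disjoint, Q \ A_m(Q) = ∪_{l=0}^{m−1} ∪{E_{Q'} : Q' ∈ 𝒮_{ν+l}, Q' ⊆ Q}, and consequently for any measure μ and any measurable set E, Σ_{Q∈𝒮} μ(E ∩ (Q \ A_m(Q))) ≤ m·μ(E). -/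
open MeasureTheory Set
open scoped ENNReal Classical

variable {α : Type*}

/-- The maximal elements (with respect to inclusion) of a finite family of sets. -/
noncomputable def maxCubes (T : Finset (Set α)) : Finset (Set α) :=
  T.filter fun Q => ∀ Q' ∈ T, Q ⊆ Q' → Q = Q'

/-- `rem S ν`: what remains of `S` after removing the first `ν` generations. -/
noncomputable def rem (S : Finset (Set α)) : ℕ → Finset (Set α)
  | 0 => S
  | ν + 1 => rem S ν \ maxCubes (rem S ν)

/-- `strat S ν` = the `ν`-th generation `𝒮_ν`: the maximal cubes of `𝒮 \ ∪_{l<ν} 𝒮_l`. -/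
noncomputable def strat (S : Finset (Set α)) (ν : ℕ) : Finset (Set α) :=
  maxCubes (rem S ν)

/-- The generation to which a cube of `S` belongs. -/
noncomputable def rank (S : Finset (Set α)) (Q : Set α) : ℕ :=
  sInf {ν | Q ∈ strat S ν}

/-- `A_m(Q) = ∪{Q' ∈ 𝒮_{ν+m} : Q' ⊆ Q}` for `Q ∈ 𝒮_ν`. -/
noncomputable def layer (S : Finset (Set α)) (ν m : ℕ) (Q : Set α) : Set α :=
  ⋃ Q' ∈ (strat S (ν + m)).filter fun Q' => Q' ⊆ Q, Q'

/-- `E_Q = Q \ ∪{Q' ∈ 𝒮_{ν+1} : Q' ⊆ Q}` for `Q` in generation `ν`. -/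
noncomputable def EQ (S : Finset (Set α)) (Q : Set α) : Set α :=
  Q \ layer S (rank S Q) 1 Q

lemma maxCubes_subset (T : Finset (Set α)) : maxCubes T ⊆ T := Finset.filter_subset _ _

lemma maxCubes_max {T : Finset (Set α)} {Q Q' : Set α} (h : Q ∈ maxCubes T)
    (h' : Q' ∈ T) (hss : Q ⊆ Q') : Q = Q' := by
  rw [maxCubes, Finset.mem_filter] at h
  exact h.2 Q' h' hss

lemma rem_subset (S : Finset (Set α)) : ∀ ν, rem S ν ⊆ S
  | 0 => subset_rfl
  | ν+1 => Finset.Subset.trans (Finset.sdiff_subset) (rem_subset S ν)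

lemma rem_anti (S : Finset (Set α)) : ∀ {a b : ℕ}, a ≤ b → rem S b ⊆ rem S a := by
  intro a b h
  induction b with
  | zero => obtain rfl : a = 0 := Nat.le_zero.mp h; exact subset_rfl
  | succ b ih =>
    rcases Nat.lt_or_ge a (b+1) with h'|h'
    · exact Finset.Subset.trans (Finset.sdiff_subset) (ih (Nat.lt_succ_iff.mp h'))
    · obtain rfl : a = b+1 := le_antisymm h h'; exact subset_rfl

lemma strat_subset_rem (S : Finset (Set α)) (ν : ℕ) : strat S ν ⊆ rem S ν :=
  maxCubes_subset _

lemma strat_subset (S : Finset (Set α)) (ν : ℕ) : strat S ν ⊆ S :=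
  Finset.Subset.trans (strat_subset_rem S ν) (rem_subset S ν)

lemma not_mem_rem_succ {S : Finset (Set α)} {Q : Set α} {ν : ℕ} (h : Q ∈ strat S ν) :
    Q ∉ rem S (ν+1) := by
  show Q ∉ rem S ν \ maxCubes (rem S ν)
  simp [Finset.mem_sdiff]
  intro _; exact h

lemma strat_pairwise {S : Finset (Set α)} {Q : Set α} {ν ν' : ℕ} (h : ν < ν')
    (hQ : Q ∈ strat S ν) : Q ∉ strat S ν' := fun hQ' =>
  not_mem_rem_succ hQ (rem_anti S h (strat_subset_rem S ν' hQ'))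

/-- every member of `rem S ν` is covered by a maximal cube of `rem S ν`. -/
lemma exists_strat_cover {S : Finset (Set α)} {R : Set α} {ν : ℕ} (hR : R ∈ rem S ν) :
    ∃ Q' ∈ strat S ν, R ⊆ Q' := by
  obtain ⟨Q', hQ', hmax⟩ := Finset.exists_maximal (s := (rem S ν).filter fun Q => R ⊆ Q)
    ⟨R, by simp [hR]⟩
  rw [Finset.mem_filter] at hQ'
  refine ⟨Q', ?_, hQ'.2⟩
  rw [strat, maxCubes, Finset.mem_filter]
  refine ⟨hQ'.1, fun Q₂ hQ₂ hss => ?_⟩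
  by_contra hne
  exact hne (le_antisymm hss (hmax (Finset.mem_filter.mpr ⟨hQ₂, hQ'.2.trans hss⟩)
    hss))

lemma exists_rank_aux {S : Finset (Set α)} :
    ∀ (n ν : ℕ) (Q : Set α), (rem S ν).card ≤ n → Q ∈ rem S ν → ∃ k, Q ∈ strat S k := by
  intro n
  induction n with
  | zero =>
    intro ν Q hc hQ
    exact absurd (Finset.card_eq_zero.mp (Nat.le_zero.mp hc) ▸ hQ) (Finset.notMem_empty Q)
  | succ n ih =>
    intro ν Q hc hQ
    by_cases h : Q ∈ maxCubes (rem S ν)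
    · exact ⟨ν, h⟩
    · have hQ' : Q ∈ rem S (ν+1) := by
        show Q ∈ rem S ν \ maxCubes (rem S ν)
        exact Finset.mem_sdiff.mpr ⟨hQ, h⟩
      obtain ⟨M, hM, hMmax⟩ := Finset.exists_maximal (s := rem S ν) ⟨Q, hQ⟩
      have hMmc : M ∈ maxCubes (rem S ν) := by
        rw [maxCubes, Finset.mem_filter]
        exact ⟨hM, fun Q₂ hQ₂ hss => by
          by_contra hne; exact hne (le_antisymm hss (hMmax hQ₂ hss))⟩
      have hss : rem S (ν+1) ⊂ rem S ν := by
        refine Finset.ssubset_iff_of_subset (rem_anti S (Nat.le_succ ν)) |>.mpr ⟨M, hM, ?_⟩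
        exact not_mem_rem_succ hMmc
      have := Finset.card_lt_card hss
      exact ih (ν+1) Q (by omega) hQ'

lemma exists_rank {S : Finset (Set α)} {Q : Set α} (hQ : Q ∈ S) : ∃ k, Q ∈ strat S k :=
  exists_rank_aux S.card 0 Q le_rfl hQ

lemma mem_strat_rank {S : Finset (Set α)} {Q : Set α} (hQ : Q ∈ S) :
    Q ∈ strat S (rank S Q) :=
  Nat.sInf_mem (exists_rank hQ)

lemma rank_eq {S : Finset (Set α)} {Q : Set α} {ν : ℕ} (h : Q ∈ strat S ν) :
    rank S Q = ν := by
  have h1 : Q ∈ strat S (rank S Q) := Nat.sInf_mem (⟨ν, h⟩ : {k | Q ∈ strat S k}.Nonempty)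
  have h2 : rank S Q ≤ ν := Nat.sInf_le h
  rcases lt_or_eq_of_le h2 with h3 | h3
  · exact absurd h (strat_pairwise h3 h1)
  · exact h3

lemma layer_subset (S : Finset (Set α)) (ν m : ℕ) (Q : Set α) : layer S ν m Q ⊆ Q := by
  intro x hx
  simp only [layer, mem_iUnion, Finset.mem_filter] at hx
  obtain ⟨Q', ⟨⟨_, h⟩, hx⟩⟩ := hx
  exact h hx

section Nested
variable {S : Finset (Set α)}
  (hnest : ∀ Q ∈ S, ∀ Q' ∈ S, Q ⊆ Q' ∨ Q' ⊆ Q ∨ Disjoint Q Q')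

include hnest in
lemma strat_unique {ν : ℕ} {Q₁ Q₂ R : Set α} (hR : R.Nonempty)
    (h1 : Q₁ ∈ strat S ν) (h2 : Q₂ ∈ strat S ν) (hs1 : R ⊆ Q₁) (hs2 : R ⊆ Q₂) :
    Q₁ = Q₂ := by
  rcases hnest Q₁ (strat_subset S ν h1) Q₂ (strat_subset S ν h2) with h | h | h
  · exact maxCubes_max h1 (strat_subset_rem S ν h2) h
  · exact (maxCubes_max h2 (strat_subset_rem S ν h1) h).symm
  · exact absurd (disjoint_self.mp (h.mono hs1 hs2)) hR.ne_empty

lemma mem_rem_of_ssubset {Q Q' : Set α} {ν : ℕ}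
    (hQ' : Q' ∈ S) (hQ : Q ∈ strat S ν) (hss : Q' ⊆ Q) (hne : Q' ≠ Q) :
    Q' ∈ rem S (ν+1) := by
  have key : ∀ l, l ≤ ν + 1 → Q' ∈ rem S l := by
    intro l
    induction l with
    | zero => intro _; exact hQ'
    | succ l ih =>
      intro hl
      have hl' : l ≤ ν := by omega
      have hQ'l : Q' ∈ rem S l := ih (by omega)
      show Q' ∈ rem S l \ maxCubes (rem S l)
      refine Finset.mem_sdiff.mpr ⟨hQ'l, fun hmc => ?_⟩
      exact hne (maxCubes_max hmc (rem_anti S hl' (strat_subset_rem S ν hQ)) hss)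
  exact key (ν+1) le_rfl

include hnest in
lemma cover_subset {ν m : ℕ} {Q Q' R : Set α} (hQ : Q ∈ strat S ν)
    (hQ' : Q' ∈ strat S (ν+m)) (hR : R.Nonempty) (hRQ : R ⊆ Q) (hRQ' : R ⊆ Q') :
    Q' ⊆ Q := by
  rcases hnest Q' (strat_subset S _ hQ') Q (strat_subset S ν hQ) with h | h | h
  · exact h
  · have : Q = Q' := maxCubes_max hQ
      (rem_anti S (Nat.le_add_right ν m) (strat_subset_rem S _ hQ')) h
    exact this ▸ subset_rfl
  · exact absurd (disjoint_self.mp (h.mono hRQ' hRQ)) hR.ne_empty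

include hnest in
lemma layer_succ_subset {ν m : ℕ} {Q : Set α} (hQ : Q ∈ strat S ν) :
    layer S ν (m+1) Q ⊆ layer S ν m Q := by
  intro x hx
  simp only [layer, mem_iUnion, Finset.mem_filter] at hx ⊢
  obtain ⟨Q'', ⟨⟨hQ'', hQ''Q⟩, hx⟩⟩ := hx
  have hrem : Q'' ∈ rem S (ν+m) :=
    rem_anti S (by omega) (strat_subset_rem S (ν+(m+1)) hQ'')
  obtain ⟨Q', hQ', hss⟩ := exists_strat_cover hrem
  have hQ'Q : Q' ⊆ Q := cover_subset hnest hQ hQ' ⟨x, hx⟩ hQ''Q hss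
  exact ⟨Q', ⟨⟨hQ', hQ'Q⟩, hss hx⟩⟩

include hnest in
lemma layer_diff {ν m : ℕ} {Q : Set α} (hQ : Q ∈ strat S ν) :
    layer S ν m Q \ layer S ν (m+1) Q =
      ⋃ Q' ∈ (strat S (ν+m)).filter fun Q' => Q' ⊆ Q, EQ S Q' := by
  ext x
  simp only [mem_diff, layer, mem_iUnion, Finset.mem_filter, EQ]
  constructor
  · rintro ⟨⟨Q', ⟨⟨hQ', hQ'Q⟩, hx⟩⟩, hnx⟩
    refine ⟨Q', ⟨⟨hQ', hQ'Q⟩, ?_⟩⟩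
    rw [rank_eq hQ']
    refine ⟨hx, fun hmem => ?_⟩
    obtain ⟨Q'', ⟨⟨hQ'', hQ''Q'⟩, hx''⟩⟩ := hmem
    exact hnx ⟨Q'', ⟨⟨hQ'', hQ''Q'.trans hQ'Q⟩, hx''⟩⟩
  · rintro ⟨Q', ⟨⟨hQ', hQ'Q⟩, hx⟩⟩
    rw [rank_eq hQ'] at hx
    obtain ⟨hxQ', hnx'⟩ := hx
    refine ⟨⟨Q', ⟨⟨hQ', hQ'Q⟩, hxQ'⟩⟩, ?_⟩
    rintro ⟨Q'', ⟨⟨hQ'', hQ''Q⟩, hx''⟩⟩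
    -- Q'' ∈ strat (ν+m+1), x ∈ Q'' ∩ Q'; show Q'' ⊆ Q' then contradiction
    have hQ''Q' : Q'' ⊆ Q' := by
      rcases hnest Q'' (strat_subset S _ hQ'') Q' (strat_subset S _ hQ') with h | h | h
      · exact h
      · exfalso
        have heq : Q' = Q'' := maxCubes_max hQ'
          (rem_anti S (by omega) (strat_subset_rem S (ν+(m+1)) hQ'')) h
        exact not_mem_rem_succ hQ' (heq ▸ strat_subset_rem S (ν+(m+1)) hQ'')
      · exact absurd rfl (h.ne_of_mem hx'' hxQ')
    exact hnx' ⟨Q'', ⟨⟨hQ'', hQ''Q'⟩, hx''⟩⟩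

include hnest in
lemma part2 : ∀ (m ν : ℕ), ∀ Q ∈ strat S ν,
    Q \ layer S ν m Q =
      ⋃ l ∈ Finset.range m,
        ⋃ Q' ∈ (strat S (ν + l)).filter fun Q' => Q' ⊆ Q, EQ S Q' := by
  intro m
  induction m with
  | zero =>
    intro ν Q hQ
    have h1 : Q ⊆ layer S ν 0 Q := by
      intro x hx
      simp only [layer, mem_iUnion, Finset.mem_filter]
      exact ⟨Q, ⟨⟨hQ, subset_rfl⟩, hx⟩⟩
    simp [Set.diff_eq_empty.mpr h1]
  | succ m ih =>
    intro ν Q hQ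
    have h1 : Q \ layer S ν (m+1) Q =
        (Q \ layer S ν m Q) ∪ (layer S ν m Q \ layer S ν (m+1) Q) := by
      rw [Set.diff_union_diff_cancel (layer_subset S ν m Q) (layer_succ_subset hnest hQ)]
    rw [h1, ih ν Q hQ, layer_diff hnest hQ, Finset.range_add_one]
    rw [Finset.set_biUnion_insert]
    exact Set.union_comm _ _

include hnest in
lemma EQ_disjoint_of_sub {Q Q' : Set α} (hQ : Q ∈ S) (hQ' : Q' ∈ S)
    (hss : Q' ⊆ Q) (hne : Q' ≠ Q) : Disjoint (EQ S Q) (EQ S Q') := by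
  rcases Q'.eq_empty_or_nonempty with rfl | hne'
  · simp [EQ]
  · have hQs : Q ∈ strat S (rank S Q) := mem_strat_rank hQ
    have hrem : Q' ∈ rem S (rank S Q + 1) := mem_rem_of_ssubset hQ' hQs hss hne
    obtain ⟨Q'', hQ'', hss''⟩ := exists_strat_cover hrem
    have hQ''Q : Q'' ⊆ Q := cover_subset hnest hQs hQ'' hne' hss hss''
    have hlay : Q' ⊆ layer S (rank S Q) 1 Q := by
      intro x hx
      simp only [layer, mem_iUnion, Finset.mem_filter]
      exact ⟨Q'', ⟨⟨hQ'', hQ''Q⟩, hss'' hx⟩⟩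
    have : Disjoint (Q \ layer S (rank S Q) 1 Q) (EQ S Q') :=
      disjoint_sdiff_self_left.mono_right (Set.diff_subset.trans hlay)
    exact this

include hnest in
lemma part1 : (S : Set (Set α)).Pairwise fun Q Q' => Disjoint (EQ S Q) (EQ S Q') := by
  intro Q hQ Q' hQ' hne
  rcases hnest Q hQ Q' hQ' with h | h | h
  · exact (EQ_disjoint_of_sub hnest hQ' hQ h hne).symm
  · exact EQ_disjoint_of_sub hnest hQ hQ' h (Ne.symm hne)
  · exact h.mono Set.diff_subset Set.diff_subset

lemma EQ_measurable [MeasurableSpace α] (hmeas : ∀ Q ∈ S, MeasurableSet Q) {Q : Set α}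
    (hQ : Q ∈ S) : MeasurableSet (EQ S Q) := by
  refine (hmeas Q hQ).diff ?_
  refine Finset.measurableSet_biUnion _ fun Q' hQ' => ?_
  exact hmeas Q' (strat_subset S _ (Finset.filter_subset _ _ hQ'))

include hnest in
lemma card_bound {Q' : Set α} (hQ'ne : Q'.Nonempty) (m : ℕ) :
    (S.filter fun Q => Q' ⊆ Q ∧ rank S Q ≤ rank S Q' ∧ rank S Q' < rank S Q + m).card ≤ m := by
  have hmap : ∀ Q ∈ (S.filter fun Q => Q' ⊆ Q ∧ rank S Q ≤ rank S Q' ∧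
      rank S Q' < rank S Q + m), rank S Q' - rank S Q ∈ Finset.range m := by
    intro Q hQ
    simp only [Finset.mem_filter] at hQ
    simp only [Finset.mem_range]
    omega
  have hinj : Set.InjOn (fun Q => rank S Q' - rank S Q)
      ↑(S.filter fun Q => Q' ⊆ Q ∧ rank S Q ≤ rank S Q' ∧ rank S Q' < rank S Q + m) := by
    intro Q₁ h1 Q₂ h2 heq
    simp only [Finset.coe_filter, Set.mem_setOf_eq] at h1 h2
    simp only at heq
    have hr : rank S Q₁ = rank S Q₂ := by omega
    have h2' : Q₂ ∈ strat S (rank S Q₁) := by rw [hr]; exact mem_strat_rank h2.1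
    exact strat_unique hnest hQ'ne (mem_strat_rank h1.1) h2' h1.2.1 h2.2.1
  simpa using Finset.card_le_card_of_injOn _ hmap hinj

include hnest in
lemma part3 [MeasurableSpace α] (hmeas : ∀ Q ∈ S, MeasurableSet Q)
    (μ : Measure α) (E : Set α) (hE : MeasurableSet E) (m : ℕ) :
    ∑ Q ∈ S, μ (E ∩ (Q \ layer S (rank S Q) m Q)) ≤ (m : ℝ≥0∞) * μ E := by
  have step1 : ∀ Q ∈ S, μ (E ∩ (Q \ layer S (rank S Q) m Q)) ≤
      ∑ Q' ∈ S.filter (fun Q' => Q' ⊆ Q ∧ rank S Q ≤ rank S Q' ∧ rank S Q' < rank S Q + m),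
        μ (E ∩ EQ S Q') := by
    intro Q hQ
    have hsub : E ∩ (Q \ layer S (rank S Q) m Q) ⊆
        ⋃ Q' ∈ S.filter (fun Q' => Q' ⊆ Q ∧ rank S Q ≤ rank S Q' ∧ rank S Q' < rank S Q + m),
          E ∩ EQ S Q' := by
      rintro x ⟨hxE, hxd⟩
      rw [part2 hnest m (rank S Q) Q (mem_strat_rank hQ)] at hxd
      simp only [mem_iUnion, Finset.mem_filter, Finset.mem_range, exists_prop] at hxd
      obtain ⟨l, hl, Q', ⟨⟨hQ's, hQ'Q⟩, hx⟩⟩ := hxd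
      simp only [mem_iUnion, Finset.mem_filter, exists_prop]
      refine ⟨Q', ⟨⟨strat_subset S _ hQ's, hQ'Q, ?_, ?_⟩, hxE, hx⟩⟩
      · rw [rank_eq hQ's]; omega
      · rw [rank_eq hQ's]; omega
    calc μ (E ∩ (Q \ layer S (rank S Q) m Q))
        ≤ μ (⋃ Q' ∈ S.filter (fun Q' => Q' ⊆ Q ∧ rank S Q ≤ rank S Q' ∧
            rank S Q' < rank S Q + m), E ∩ EQ S Q') := measure_mono hsub
      _ ≤ ∑ Q' ∈ S.filter (fun Q' => Q' ⊆ Q ∧ rank S Q ≤ rank S Q' ∧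
            rank S Q' < rank S Q + m), μ (E ∩ EQ S Q') := measure_biUnion_finset_le _ _
  calc ∑ Q ∈ S, μ (E ∩ (Q \ layer S (rank S Q) m Q))
      ≤ ∑ Q ∈ S, ∑ Q' ∈ S.filter (fun Q' => Q' ⊆ Q ∧ rank S Q ≤ rank S Q' ∧
          rank S Q' < rank S Q + m), μ (E ∩ EQ S Q') := Finset.sum_le_sum step1
    _ = ∑ Q ∈ S, ∑ Q' ∈ S, if Q' ⊆ Q ∧ rank S Q ≤ rank S Q' ∧ rank S Q' < rank S Q + m
          then μ (E ∩ EQ S Q') else 0 :=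
        Finset.sum_congr rfl fun Q _ => Finset.sum_filter _ _
    _ = ∑ Q' ∈ S, ∑ Q ∈ S, if Q' ⊆ Q ∧ rank S Q ≤ rank S Q' ∧ rank S Q' < rank S Q + m
          then μ (E ∩ EQ S Q') else 0 := Finset.sum_comm
    _ = ∑ Q' ∈ S, ((S.filter fun Q => Q' ⊆ Q ∧ rank S Q ≤ rank S Q' ∧
          rank S Q' < rank S Q + m).card : ℝ≥0∞) * μ (E ∩ EQ S Q') := by
        refine Finset.sum_congr rfl fun Q' _ => ?_
        rw [← Finset.sum_filter, Finset.sum_const, nsmul_eq_mul]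
    _ ≤ ∑ Q' ∈ S, (m : ℝ≥0∞) * μ (E ∩ EQ S Q') := by
        refine Finset.sum_le_sum fun Q' hQ' => ?_
        rcases Q'.eq_empty_or_nonempty with rfl | hne
        · have h0 : μ (E ∩ EQ S ∅) = 0 := by simp [EQ]
          simp [h0]
        · exact mul_le_mul_left (by exact_mod_cast card_bound hnest hne m) _
    _ = (m : ℝ≥0∞) * ∑ Q' ∈ S, μ (E ∩ EQ S Q') := (Finset.mul_sum _ _ _).symm
    _ ≤ (m : ℝ≥0∞) * μ E := by
        refine mul_le_mul_right ?_ _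
        have hdisj : (↑S : Set (Set α)).Pairwise
            (Function.onFun Disjoint fun Q' => E ∩ EQ S Q') := by
          intro a ha b hb hne
          exact ((part1 hnest) ha hb hne).mono inter_subset_right inter_subset_right
        rw [← measure_biUnion_finset hdisj fun Q' hQ' => hE.inter (EQ_measurable hmeas hQ')]
        exact measure_mono (Set.iUnion₂_subset fun Q' _ => Set.inter_subset_left)

end Nested


/-- Stratification lemma (Domingo-Salazar–Lacey–Rey): for a finite nested-or-disjoint
family `𝒮`: the sets `E_Q` are pairwise disjoint;
`Q \ A_m(Q) = ∪_{l<m} ∪{E_{Q'} : Q' ∈ 𝒮_{ν+l}, Q' ⊆ Q}` for `Q ∈ 𝒮_ν`; and for any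
measure `μ` and measurable set `E`, `Σ_{Q∈𝒮} μ(E ∩ (Q \ A_m(Q))) ≤ m·μ(E)`. -/
theorem stmt18 [MeasurableSpace α] (S : Finset (Set α))
    (hmeas : ∀ Q ∈ S, MeasurableSet Q)
    (hnest : ∀ Q ∈ S, ∀ Q' ∈ S, Q ⊆ Q' ∨ Q' ⊆ Q ∨ Disjoint Q Q') :
    ((S : Set (Set α)).Pairwise fun Q Q' => Disjoint (EQ S Q) (EQ S Q')) ∧
    (∀ (m ν : ℕ), ∀ Q ∈ strat S ν,
      Q \ layer S ν m Q =
        ⋃ l ∈ Finset.range m,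
          ⋃ Q' ∈ (strat S (ν + l)).filter fun Q' => Q' ⊆ Q, EQ S Q') ∧
    (∀ (μ : Measure α) (E : Set α), MeasurableSet E → ∀ m : ℕ,
      ∑ Q ∈ S, μ (E ∩ (Q \ layer S (rank S Q) m Q)) ≤ (m : ℝ≥0∞) * μ E) :=
  ⟨part1 hnest, part2 hnest, fun μ E hE m => part3 hnest hmeas μ E hE m⟩
end
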